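/- Let K ⊂ R^d be a convex body and K* its polar with respect to the centroid of K. Then vol(K)·vol(K*) is bounded above and below by positive constants depending only on d. -/

import Mathlib

open MeasureTheory
open scoped RealInnerProductSpace

/-- The polar of a set `K` with respect to a point `x`. -/
def polarAt {d : ℕ} (x : EuclideanSpace ℝ (Fin d)) (K : Set (EuclideanSpace ℝ (Fin d))) :
    Set (EuclideanSpace ℝ (Fin d)) :=
  {u | ∀ v ∈ K, ⟪u, v - x⟫ ≤ 1}

noncomputable section Stmt10Aux
namespace Stmt10

open Set

variable {d : ℕ}

/-- polar with respect to the origin -/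
def polar0 (C : Set (EuclideanSpace ℝ (Fin d))) : Set (EuclideanSpace ℝ (Fin d)) :=
  {u | ∀ v ∈ C, ⟪u, v⟫ ≤ 1}

/-- the constant in the centroid lemma -/
def β (d : ℕ) : ℝ := ((d : ℝ) / (d + 1)) ^ d / (d + 1)

def τ (d : ℕ) : ℝ := β d / (1 + β d * d)

lemma β_pos (hd : 0 < d) : 0 < β d := by
  have : (0:ℝ) < (d:ℝ) := by exact_mod_cast hd
  have h1 : (0:ℝ) < (d:ℝ) + 1 := by linarith
  exact div_pos (pow_pos (div_pos this h1) d) h1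

lemma β_le_one (hd : 0 < d) : β d ≤ 1 := by
  have : (0:ℝ) < (d:ℝ) := by exact_mod_cast hd
  have h1 : (0:ℝ) < (d:ℝ) + 1 := by linarith
  have h2 : (d:ℝ)/(d+1) ≤ 1 := by rw [div_le_one h1]; linarith
  have h3 : ((d:ℝ)/(d+1))^d ≤ 1 := pow_le_one₀ (le_of_lt (div_pos this h1)) h2
  rw [β, div_le_one h1]; nlinarith

lemma τ_pos (hd : 0 < d) : 0 < τ d := by
  have hb := β_pos hd
  have : (0:ℝ) < 1 + β d * d := by positivity
  exact div_pos hb this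

lemma τ_le_one (hd : 0 < d) : τ d ≤ 1 := by
  have hb := β_pos hd
  have h1 : (0:ℝ) < 1 + β d * d := by positivity
  rw [τ, div_le_one h1]
  have hd1 : (1:ℝ) ≤ (d:ℝ) := by exact_mod_cast hd
  nlinarith [β_le_one hd, hb.le]

section Body

variable (hd : 0 < d) {C : Set (EuclideanSpace ℝ (Fin d))}
  (hconv : Convex ℝ C) (hcomp : IsCompact C) (h0 : (0:EuclideanSpace ℝ (Fin d)) ∈ C)
  (hvol : 0 < volume C) (hcent : (∫ x in C, x) = (0:EuclideanSpace ℝ (Fin d)))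

include hd hconv hcomp h0 hvol hcent

set_option maxHeartbeats 1000000 in
/-- Centroid lemma: if `v` maximizes the linear functional `f` on `C`, then some point of `C`
has `f`-value at most `-τ d * f v`. -/
lemma centroid_dir (f : EuclideanSpace ℝ (Fin d) →L[ℝ] ℝ) {v : EuclideanSpace ℝ (Fin d)}
    (hv : v ∈ C) (hmax : ∀ x ∈ C, f x ≤ f v) :
    ∃ w ∈ C, f w ≤ -(τ d * f v) := by
  have hne : C.Nonempty := ⟨0, h0⟩
  have hd1 : (0:ℝ) < (d:ℝ) + 1 := by positivity
  have hdpos : (0:ℝ) < (d:ℝ) := by exact_mod_cast hd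
  have hvolfin : volume C ≠ ⊤ := hcomp.measure_lt_top.ne
  have hCmeas : MeasurableSet C := hcomp.measurableSet
  obtain ⟨w, hw, hwmax⟩ := hcomp.exists_isMaxOn hne (f.continuous.neg.continuousOn)
  refine ⟨w, hw, ?_⟩
  set m : ℝ := -(f w) with hm
  have hlb : ∀ x ∈ C, -m ≤ f x := by
    intro x hx
    have := hwmax hx
    simp only [Set.mem_setOf_eq, Pi.neg_apply] at this
    simp only [hm, neg_neg]
    linarith
  have hm0 : 0 ≤ m := by
    have := hwmax h0
    simp only [Set.mem_setOf_eq, map_zero, neg_zero] at this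
    simpa [hm] using this
  have hfv0 : 0 ≤ f v := by
    have := hmax 0 h0
    simpa using this
  set r : ℝ := (d:ℝ)/((d:ℝ)+1) with hr
  have hr0 : 0 ≤ r := by positivity
  have hr1 : r + 1/((d:ℝ)+1) = 1 := by rw [hr]; field_simp
  have hrd : r * ((d:ℝ)+1) = (d:ℝ) := by rw [hr]; field_simp
  set T : EuclideanSpace ℝ (Fin d) → EuclideanSpace ℝ (Fin d) :=
    fun x => AffineMap.homothety v r x with hT
  have hTx : ∀ x, T x = r • x + (1 - r) • v := by
    intro x
    simp only [hT, AffineMap.homothety_apply, vsub_eq_sub, vadd_eq_add, smul_sub]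
    module
  have hTC : T '' C ⊆ C := by
    rintro - ⟨x, hx, rfl⟩
    rw [hTx]
    exact hconv hx hv hr0 (by linarith [hr1, (by positivity : (0:ℝ) ≤ 1/((d:ℝ)+1))])
      (by linarith [hr1])
  have hTcont : Continuous T := (AffineMap.homothety v r).continuous_of_finiteDimensional
  have hTCcomp : IsCompact (T '' C) := hcomp.image hTcont
  have hTCmeas : MeasurableSet (T '' C) := hTCcomp.measurableSet
  have hvolTC : volume (T '' C) = ENNReal.ofReal (r ^ d) * volume C := by
    rw [hT, Measure.addHaar_image_homothety]
    congr 2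
    rw [finrank_euclideanSpace_fin, abs_of_nonneg (by positivity)]
  -- integrability
  have hIOn : IntegrableOn (fun x => f x) C volume :=
    (f.continuous.continuousOn).integrableOn_compact hcomp
  have hIid : IntegrableOn (fun x => x) C volume :=
    (continuous_id.continuousOn).integrableOn_compact hcomp
  have hIzero : (∫ x in C, f x) = 0 := by
    rw [ContinuousLinearMap.integral_comp_comm f hIid, hcent, map_zero]
  -- split the integral
  have hsplit : (∫ x in C \ T '' C, f x) = (∫ x in C, f x) - ∫ x in T '' C, f x :=
    integral_diff hTCmeas hIOn hTC
  -- lower bound on T '' C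
  have hbound1 : ((f v - (d:ℝ) * m)/((d:ℝ)+1)) * (volume (T '' C)).toReal
      ≤ ∫ x in T '' C, f x := by
    apply setIntegral_ge_of_const_le_real hTCmeas
      (lt_of_le_of_lt (measure_mono hTC) hcomp.measure_lt_top).ne
    · rintro - ⟨x, hx, rfl⟩
      have hfx := hlb x hx
      have hfT : f (T x) = r * f x + (1 - r) * f v := by
        rw [hTx]
        rw [f.map_add, f.map_smul, f.map_smul]
        simp [smul_eq_mul]
      rw [hfT, div_le_iff₀ hd1]
      nlinarith [hfx, hrd, hdpos.le, mul_le_mul_of_nonneg_left hfx hdpos.le]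
    · exact hIOn.mono_set hTC
  -- lower bound on the complement
  have hbound2 : (-m) * (volume (C \ T '' C)).toReal ≤ ∫ x in C \ T '' C, f x := by
    apply setIntegral_ge_of_const_le_real (hCmeas.diff hTCmeas)
      (lt_of_le_of_lt (measure_mono Set.diff_subset) hcomp.measure_lt_top).ne
    · exact fun x hx => hlb x hx.1
    · exact hIOn.mono_set Set.diff_subset
  -- volumes
  set V : ℝ := (volume C).toReal with hV
  have hVpos : 0 < V := ENNReal.toReal_pos hvol.ne' hvolfin
  set κ : ℝ := r ^ d with hκ
  have hκ0 : 0 ≤ κ := by rw [hκ]; positivity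
  have hVT : (volume (T '' C)).toReal = κ * V := by
    rw [hvolTC, ENNReal.toReal_mul, ENNReal.toReal_ofReal (by positivity)]
  have hVdiff : (volume (C \ T '' C)).toReal ≤ V := by
    rw [hV]
    apply ENNReal.toReal_mono hvolfin (measure_mono Set.diff_subset)
  clear_value m r T V κ
  -- combine
  have hmain : m * V ≥ β d * (f v - (d:ℝ) * m) * V := by
    have h1 : 0 ≥ ((f v - (d:ℝ) * m)/((d:ℝ)+1)) * (κ * V) + (-m) * (volume (C \ T '' C)).toReal := by
      rw [← hVT]
      calc ((f v - (d:ℝ) * m)/((d:ℝ)+1)) * (volume (T '' C)).toReal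
            + (-m) * (volume (C \ T '' C)).toReal
          ≤ (∫ x in T '' C, f x) + ∫ x in C \ T '' C, f x := add_le_add hbound1 hbound2
        _ = ∫ x in C, f x := by rw [hsplit]; ring
        _ = 0 := hIzero
    have h2 : (-m) * (volume (C \ T '' C)).toReal ≥ -(m * V) := by
      have : m * (volume (C \ T '' C)).toReal ≤ m * V :=
        mul_le_mul_of_nonneg_left hVdiff hm0
      linarith
    have hβ : β d = κ / ((d:ℝ)+1) := by rw [β, hκ, hr]
    rw [hβ]
    have heq : ((f v - (d:ℝ) * m)/((d:ℝ)+1)) * (κ * V) = κ/((d:ℝ)+1) * (f v - (d:ℝ) * m) * V := by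
      ring
    linarith [h1, h2, heq]
  have hβd : (0:ℝ) < 1 + β d * d := by nlinarith [β_pos hd, hdpos]
  have hfin : τ d * f v ≤ m := by
    have hmul : β d * (f v - (d:ℝ)*m) * V ≤ m * V := by linarith [hmain]
    have hmge : β d * (f v - (d:ℝ)*m) ≤ m := le_of_mul_le_mul_right hmul hVpos
    rw [τ, div_mul_eq_mul_div, div_le_iff₀ hβd]
    nlinarith [hmge]
  simp only [hm] at hfin
  linarith

/-- Reflection: `-τ d • x ∈ C` for `x ∈ C`. -/
lemma refl_mem (x : EuclideanSpace ℝ (Fin d)) (hx : x ∈ C) : (-τ d) • x ∈ C := by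
  by_contra hnot
  obtain ⟨f, u, hfa, hu⟩ := geometric_hahn_banach_closed_point hconv hcomp.isClosed hnot
  obtain ⟨v', hv', hmax'⟩ := hcomp.exists_isMaxOn ⟨0, h0⟩ ((-f).continuous.continuousOn)
  have hmax'' : ∀ y ∈ C, (-f) y ≤ (-f) v' := by
    intro y hy
    have := hmax' hy
    simpa using this
  obtain ⟨w', hw', hw'le⟩ := centroid_dir hd hconv hcomp h0 hvol hcent (-f) hv' hmax''
  have hτ0 : 0 ≤ τ d := (τ_pos hd).le
  have h1 : f ((-τ d) • x) = τ d * (-(f x)) := by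
    rw [f.map_smul]
    simp only [smul_eq_mul]
    ring
  have h2 : -(f x) ≤ -(f v') := by simpa using hmax'' x hx
  have h3 : τ d * (-(f x)) ≤ τ d * (-(f v')) := mul_le_mul_of_nonneg_left h2 hτ0
  have h4 : τ d * (-(f v')) ≤ f w' := by
    have : (-f) w' ≤ -(τ d * ((-f) v')) := hw'le
    simp only [ContinuousLinearMap.neg_apply] at this
    linarith
  have h5 : f w' < u := hfa w' hw'
  linarith

/-- scaled points stay in C -/
lemma scaled_mem {y : EuclideanSpace ℝ (Fin d)} (hy : y ∈ C) {r : ℝ}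
    (hr1 : -(τ d) ≤ r) (hr2 : r ≤ 1) : r • y ∈ C := by
  rcases le_or_gt 0 r with hr0 | hr0
  · exact hconv.smul_mem_of_zero_mem h0 hy ⟨hr0, hr2⟩
  · have hτ := τ_pos hd
    have hz : (-τ d) • y ∈ C := refl_mem hd hconv hcomp h0 hvol hcent y hy
    have : r • y = (r / (-τ d)) • ((-τ d) • y) := by
      rw [smul_smul, div_mul_cancel₀]
      exact (neg_ne_zero.mpr hτ.ne')
    rw [this]
    apply hconv.smul_mem_of_zero_mem h0 hz
    have hrw : r / (-τ d) = (-r) / τ d := by rw [div_neg, neg_div]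
    constructor
    · rw [hrw]; exact div_nonneg (by linarith) hτ.le
    · rw [hrw, div_le_one hτ]; linarith


omit hd hconv hcent in
lemma exists_maxdet :
    ∃ v : Fin d → EuclideanSpace ℝ (Fin d), (∀ i, v i ∈ C) ∧
      0 < |(Matrix.of fun i j => v j i).det| ∧
      ∀ w : Fin d → EuclideanSpace ℝ (Fin d), (∀ i, w i ∈ C) →
        |(Matrix.of fun i j => w j i).det| ≤ |(Matrix.of fun i j => v j i).det| := by
  classical
  have hS : IsCompact (Set.univ.pi fun _ : Fin d => C) := isCompact_univ_pi fun _ => hcomp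
  have hSne : (Set.univ.pi fun _ : Fin d => C).Nonempty := ⟨fun _ => 0, fun i _ => h0⟩
  have hcont : Continuous fun v : Fin d → EuclideanSpace ℝ (Fin d) =>
      |(Matrix.of fun i j => v j i).det| := by
    apply Continuous.abs
    apply Continuous.matrix_det
    apply continuous_matrix
    intro i j
    fun_prop
  obtain ⟨v, hvS, hvmax⟩ := hS.exists_isMaxOn hSne hcont.continuousOn
  have hvmax' : ∀ w : Fin d → EuclideanSpace ℝ (Fin d), (∀ i, w i ∈ C) →
      |(Matrix.of fun i j => w j i).det| ≤ |(Matrix.of fun i j => v j i).det| := by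
    intro w hw
    have := hvmax (Set.mem_univ_pi.mpr fun i => hw i)
    simpa using this
  refine ⟨v, fun i => hvS i (Set.mem_univ i), ?_, hvmax'⟩
  -- positivity of the max: there is a tuple with nonzero determinant
  have hspan : Submodule.span ℝ C = ⊤ := by
    by_contra hne
    have h0' : volume (Submodule.span ℝ C : Set (EuclideanSpace ℝ (Fin d))) = 0 :=
      Measure.addHaar_submodule _ _ hne
    exact absurd (le_antisymm (le_trans (measure_mono Submodule.subset_span) h0'.le)
      (zero_le')) hvol.ne'
  obtain ⟨b, hbC, hbspan, hbind⟩ := exists_linearIndependent ℝ C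
  rw [hspan] at hbspan
  haveI : Fintype b := (hbind.setFinite).fintype
  let B : Module.Basis b ℝ (EuclideanSpace ℝ (Fin d)) := Module.Basis.mk hbind (by rw [Subtype.range_coe, hbspan])
  have hcard : Fintype.card b = d := by
    have h1 := Module.finrank_eq_card_basis B
    rw [finrank_euclideanSpace_fin] at h1
    omega
  let eq : Fin d ≃ b := (Fintype.equivFinOfCardEq hcard).symm
  set w : Fin d → EuclideanSpace ℝ (Fin d) := fun i => B (eq i) with hwdef
  have hwC : ∀ i, w i ∈ C := by
    intro i
    have hBi : (B (eq i) : EuclideanSpace ℝ (Fin d)) = ((eq i : b) : EuclideanSpace ℝ (Fin d)) := by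
      simp [B, Module.Basis.mk_apply]
    show B (eq i) ∈ C
    rw [hBi]
    exact hbC (eq i).2
  set e : Module.Basis (Fin d) ℝ (EuclideanSpace ℝ (Fin d)) :=
    (EuclideanSpace.basisFun (Fin d) ℝ).toBasis with he
  have hdetw : (Matrix.of fun i j => w j i).det ≠ 0 := by
    have hind : LinearIndependent ℝ w := B.linearIndependent.comp _ eq.injective
    have hsp : Submodule.span ℝ (Set.range w) = ⊤ := by
      have : Set.range w = Set.range B := eq.surjective.range_comp _
      rw [this, B.span_eq]
    have hunit : IsUnit (e.det w) := (Module.Basis.is_basis_iff_det e).mp ⟨hind, hsp⟩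
    have hmatval : e.toMatrix w = Matrix.of fun i j => w j i := by
      ext i j
      rw [Module.Basis.toMatrix_apply]
      simp [he, EuclideanSpace.basisFun_repr]
    rw [← hmatval]
    rw [Module.Basis.det_apply] at hunit
    exact hunit.ne_zero
  calc (0:ℝ) < |(Matrix.of fun i j => w j i).det| := abs_pos.mpr hdetw
    _ ≤ _ := hvmax' w hwC

omit hd hconv hcent hvol in
/-- Cramer's rule coordinates with respect to a determinant-maximizing tuple. -/
lemma coords_le_one {v : Fin d → EuclideanSpace ℝ (Fin d)} (hv : ∀ i, v i ∈ C)
    (hdet : (Matrix.of fun i j => v j i).det ≠ 0)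
    (hvmax : ∀ w : Fin d → EuclideanSpace ℝ (Fin d), (∀ i, w i ∈ C) →
      |(Matrix.of fun i j => w j i).det| ≤ |(Matrix.of fun i j => v j i).det|)
    {x : EuclideanSpace ℝ (Fin d)} (hx : x ∈ C) :
    ∃ s : Fin d → ℝ, (∀ i, |s i| ≤ 1) ∧ (∀ k, x k = ∑ j, s j * v j k) := by
  classical
  set A : Matrix (Fin d) (Fin d) ℝ := Matrix.of fun i j => v j i with hA
  have hunit : IsUnit A.det := isUnit_iff_ne_zero.mpr hdet
  set s : Fin d → ℝ := A⁻¹.mulVec (fun k => x k) with hs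
  have hAs : A.mulVec s = fun k => x k := by
    rw [hs, Matrix.mulVec_mulVec, Matrix.mul_nonsing_inv _ hunit, Matrix.one_mulVec]
  refine ⟨s, ?_, ?_⟩
  · intro i
    have hsi : s i = (Ring.inverse A.det) * (A.cramer (fun k => x k) i) := by
      rw [hs, Matrix.inv_def, Matrix.smul_mulVec, Matrix.cramer_eq_adjugate_mulVec]
      simp
    have hcram : A.cramer (fun k => x k) i = (Matrix.of fun k j => (Function.update v i x) j k).det := by
      rw [Matrix.cramer_apply]
      congr 1
      ext k j
      rw [Matrix.updateCol_apply]
      simp only [Matrix.of_apply, Function.update_apply]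
      by_cases h : j = i <;> simp [h, hA]
    have hupC : ∀ j, Function.update v i x j ∈ C := by
      intro j
      rcases eq_or_ne j i with h | h
      · rw [h, Function.update_self]; exact hx
      · rw [Function.update_of_ne h]; exact hv j
    have hle := hvmax _ hupC
    rw [hsi, abs_mul]
    rw [Ring.inverse_eq_inv', abs_inv]
    rw [hcram]
    rw [inv_mul_le_iff₀ (abs_pos.mpr hdet), mul_one]
    exact hle
  · intro k
    have := congrFun hAs k
    rw [← this]
    simp only [Matrix.mulVec, dotProduct, hA, Matrix.of_apply]
    exact Finset.sum_congr rfl fun j _ => mul_comm _ _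

end Body

/-- coordinate box -/
def box (d : ℕ) (a b : ℝ) : Set (EuclideanSpace ℝ (Fin d)) :=
  {x | ∀ i, x i ∈ Set.Icc a b}

lemma volume_box (a b : ℝ) :
    volume (box d a b) = ENNReal.ofReal (b - a) ^ d := by
  have hmp := PiLp.volume_preserving_ofLp (Fin d)
  have hbox : box d a b
      = (WithLp.ofLp (p := 2) (V := Fin d → ℝ)) ⁻¹' (Set.univ.pi fun _ => Set.Icc a b) := by
    ext x
    simp only [box, Set.mem_preimage, Set.mem_univ_pi, Set.mem_setOf_eq]
  rw [hbox, hmp.measure_preimage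
    (MeasurableSet.univ_pi fun _ => measurableSet_Icc).nullMeasurableSet]
  rw [volume_pi_pi]
  simp [Real.volume_Icc]

lemma det_toEuclideanLin (A : Matrix (Fin d) (Fin d) ℝ) :
    LinearMap.det (Matrix.toEuclideanLin A) = A.det := by
  rw [← LinearMap.det_toMatrix (EuclideanSpace.basisFun (Fin d) ℝ).toBasis]
  congr 1
  ext i j
  rw [LinearMap.toMatrix_apply]
  simp [Matrix.toEuclideanLin_apply, Matrix.mulVec, dotProduct,
    EuclideanSpace.basisFun_apply, EuclideanSpace.single_apply,
    OrthonormalBasis.coe_toBasis_repr_apply, EuclideanSpace.basisFun_repr]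

lemma euclLin_apply (A : Matrix (Fin d) (Fin d) ℝ) (u : EuclideanSpace ℝ (Fin d)) (k : Fin d) :
    (Matrix.toEuclideanLin A u) k = ∑ j, A k j * u j := by
  simp [Matrix.toEuclideanLin_apply, Matrix.mulVec, dotProduct]

lemma esum_apply {n : ℕ} (y : Fin n → EuclideanSpace ℝ (Fin d)) (k : Fin d) :
    (∑ i, y i) k = ∑ i, y i k := by
  rw [WithLp.ofLp_sum]; exact Finset.sum_apply k Finset.univ _

lemma einner_eq (u x : EuclideanSpace ℝ (Fin d)) : ⟪u, x⟫ = ∑ k, u k * x k := by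
  simp [PiLp.inner_apply, RCLike.inner_apply, mul_comm]

section Main

variable (hd : 0 < d) {C : Set (EuclideanSpace ℝ (Fin d))}
  (hconv : Convex ℝ C) (hcomp : IsCompact C) (h0 : (0:EuclideanSpace ℝ (Fin d)) ∈ C)
  (hvol : 0 < volume C) (hcent : (∫ x in C, x) = (0:EuclideanSpace ℝ (Fin d)))

include hd hconv hcomp h0 hvol hcent

set_option maxHeartbeats 1000000 in
lemma body_bounds :
    (2 * τ d / d) ^ d * (2 / (d:ℝ)) ^ d ≤ (volume C).toReal * (volume (polar0 C)).toReal ∧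
      (volume C).toReal * (volume (polar0 C)).toReal ≤ 2 ^ d * (1 + 1 / τ d) ^ d := by
  classical
  have hdpos : (0:ℝ) < (d:ℝ) := by exact_mod_cast hd
  have hτ : 0 < τ d := τ_pos hd
  have hτ1 : τ d ≤ 1 := τ_le_one hd
  obtain ⟨v, hvC, hvdet, hvmax⟩ := exists_maxdet hcomp h0 hvol
  set A : Matrix (Fin d) (Fin d) ℝ := Matrix.of fun i j => v j i with hA
  have hdet : A.det ≠ 0 := fun h => (abs_pos.mp hvdet) h
  set D : ℝ := |A.det| with hD
  have hDpos : 0 < D := abs_pos.mpr hdet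
  set M : EuclideanSpace ℝ (Fin d) →ₗ[ℝ] EuclideanSpace ℝ (Fin d) := Matrix.toEuclideanLin A with hM
  set L : EuclideanSpace ℝ (Fin d) →ₗ[ℝ] EuclideanSpace ℝ (Fin d) := Matrix.toEuclideanLin A.transpose with hL
  have hdetM : LinearMap.det M = A.det := det_toEuclideanLin A
  have hdetL : LinearMap.det L = A.det := by rw [hL, det_toEuclideanLin, Matrix.det_transpose]
  have hLu : ∀ u : EuclideanSpace ℝ (Fin d), ∀ i, (L u) i = ⟪u, v i⟫ := by
    intro u i
    rw [hL, euclLin_apply, einner_eq]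
    exact Finset.sum_congr rfl fun j _ => by simp [hA, Matrix.transpose_apply, mul_comm]
  -- Inclusion 1 : C ⊆ M '' box(-1,1)
  have hIncl1 : C ⊆ M '' box d (-1) 1 := by
    intro x hx
    obtain ⟨s, hs1, hs2⟩ := coords_le_one hcomp h0 hvC hdet hvmax hx
    refine ⟨WithLp.toLp 2 s, fun i => abs_le.mp (hs1 i), ?_⟩
    ext k
    rw [hM, euclLin_apply]
    rw [hs2 k]
    exact Finset.sum_congr rfl fun j _ => by simp [hA, mul_comm]
  -- Inclusion 2 : M '' box(-τ/d, τ/d) ⊆ C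
  have hIncl2 : M '' box d (-(τ d / d)) (τ d / d) ⊆ C := by
    rintro - ⟨s, hs, rfl⟩
    have hMs : M s = ∑ i, (1/(d:ℝ)) • (((d:ℝ) * s i) • v i) := by
      ext k
      rw [hM, euclLin_apply, esum_apply]
      refine Finset.sum_congr rfl fun j _ => ?_
      have : ((1/(d:ℝ)) • (((d:ℝ) * s j) • v j)) k = (1/(d:ℝ)) * (((d:ℝ) * s j) * v j k) := rfl
      rw [this]
      rw [hA, Matrix.of_apply]
      field_simp [hA]
    rw [hMs]
    apply hconv.sum_mem (fun i _ => by positivity)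
    · rw [Finset.sum_const, Finset.card_univ, Fintype.card_fin, nsmul_eq_mul]
      field_simp
    · intro i _
      have hdτ : (d:ℝ) * (τ d / d) = τ d := by field_simp
      have h1' := mul_le_mul_of_nonneg_left (hs i).1 hdpos.le
      have h2' := mul_le_mul_of_nonneg_left (hs i).2 hdpos.le
      rw [mul_neg, hdτ] at h1'
      rw [hdτ] at h2'
      exact scaled_mem hd hconv hcomp h0 hvol hcent (hvC i) h1' (by linarith)
  -- Inclusion 3 : polar0 C ⊆ L ⁻¹' box(-(1/τ),1)
  have hIncl3 : polar0 C ⊆ L ⁻¹' box d (-(1/τ d)) 1 := by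
    intro u hu
    intro i
    rw [hLu u i, Set.mem_Icc]
    constructor
    · have h1 : ⟪u, (-τ d) • v i⟫ ≤ 1 := hu _ (refl_mem hd hconv hcomp h0 hvol hcent (v i) (hvC i))
      rw [real_inner_smul_right] at h1
      have h2 : -⟪u, v i⟫ ≤ 1/τ d := by
        rw [le_div_iff₀ hτ]
        nlinarith [h1]
      linarith
    · exact hu _ (hvC i)
  -- Inclusion 4 : L ⁻¹' box(-(1/d),1/d) ⊆ polar0 C
  have hIncl4 : L ⁻¹' box d (-(1/(d:ℝ))) (1/(d:ℝ)) ⊆ polar0 C := by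
    intro u hu
    intro x hx
    obtain ⟨s, hs1, hs2⟩ := coords_le_one hcomp h0 hvC hdet hvmax hx
    have hinner : ⟪u, x⟫ = ∑ j, s j * ⟪u, v j⟫ := by
      rw [einner_eq]
      have : ∀ k, u k * x k = ∑ j, s j * (u k * v j k) := by
        intro k
        rw [hs2 k, Finset.mul_sum]
        exact Finset.sum_congr rfl fun j _ => by ring
      rw [Finset.sum_congr rfl fun k _ => this k, Finset.sum_comm]
      refine Finset.sum_congr rfl fun j _ => ?_
      rw [einner_eq, Finset.mul_sum]
    rw [hinner]
    calc ∑ j, s j * ⟪u, v j⟫ ≤ ∑ j : Fin d, 1/(d:ℝ) := by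
          apply Finset.sum_le_sum
          intro j _
          have hb := hu j
          rw [hLu u j, Set.mem_Icc] at hb
          calc s j * ⟪u, v j⟫ ≤ |s j * ⟪u, v j⟫| := le_abs_self _
            _ = |s j| * |⟪u, v j⟫| := abs_mul _ _
            _ ≤ 1 * (1/(d:ℝ)) := by
                apply mul_le_mul (hs1 j) ?_ (abs_nonneg _) zero_le_one
                rw [abs_le]
                exact ⟨by linarith [hb.1], hb.2⟩
            _ = 1/(d:ℝ) := one_mul _
      _ = 1 := by
          rw [Finset.sum_const, Finset.card_univ, Fintype.card_fin, nsmul_eq_mul]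
          field_simp
  -- volume computations
  have hvolfin : volume C ≠ ⊤ := hcomp.measure_lt_top.ne
  have hv1 : volume C ≤ ENNReal.ofReal D * ENNReal.ofReal 2 ^ d := by
    calc volume C ≤ volume (M '' box d (-1) 1) := measure_mono hIncl1
      _ = ENNReal.ofReal D * ENNReal.ofReal 2 ^ d := by
          rw [Measure.addHaar_image_linearMap, hdetM, volume_box]
          norm_num [hD]
  have hv2 : ENNReal.ofReal D * ENNReal.ofReal (2 * τ d / d) ^ d ≤ volume C := by
    calc ENNReal.ofReal D * ENNReal.ofReal (2 * τ d / d) ^ d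
        = volume (M '' box d (-(τ d / d)) (τ d / d)) := by
          rw [Measure.addHaar_image_linearMap, hdetM, volume_box, ← hD,
            show (τ d/(d:ℝ)) - -(τ d/(d:ℝ)) = 2*τ d/(d:ℝ) by ring]
      _ ≤ volume C := measure_mono hIncl2
  have hv3 : volume (polar0 C) ≤ ENNReal.ofReal D⁻¹ * ENNReal.ofReal (1 + 1/τ d) ^ d := by
    calc volume (polar0 C) ≤ volume (L ⁻¹' box d (-(1/τ d)) 1) := measure_mono hIncl3
      _ = ENNReal.ofReal D⁻¹ * ENNReal.ofReal (1 + 1/τ d) ^ d := by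
          rw [Measure.addHaar_preimage_linearMap _ (by rw [hdetL]; exact hdet), hdetL, volume_box,
            abs_inv, ← hD, show (1:ℝ) - -(1/τ d) = 1 + 1/τ d by ring]
  have hv4 : ENNReal.ofReal D⁻¹ * ENNReal.ofReal (2/(d:ℝ)) ^ d ≤ volume (polar0 C) := by
    calc ENNReal.ofReal D⁻¹ * ENNReal.ofReal (2/(d:ℝ)) ^ d
        = volume (L ⁻¹' box d (-(1/(d:ℝ))) (1/(d:ℝ))) := by
          rw [Measure.addHaar_preimage_linearMap _ (by rw [hdetL]; exact hdet), hdetL, volume_box,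
            abs_inv, ← hD, show (1/(d:ℝ)) - -(1/(d:ℝ)) = 2/(d:ℝ) by ring]
      _ ≤ volume (polar0 C) := measure_mono hIncl4
  -- convert to real
  have hbfin : ENNReal.ofReal D⁻¹ * ENNReal.ofReal (1 + 1/τ d) ^ d ≠ ⊤ :=
    ENNReal.mul_ne_top ENNReal.ofReal_ne_top (ENNReal.pow_ne_top ENNReal.ofReal_ne_top)
  have hpolfin : volume (polar0 C) ≠ ⊤ := ne_top_of_le_ne_top hbfin hv3
  set a : ℝ := (volume C).toReal with ha
  set b : ℝ := (volume (polar0 C)).toReal with hb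
  have ha0 : 0 ≤ a := ENNReal.toReal_nonneg
  have hb0 : 0 ≤ b := ENNReal.toReal_nonneg
  have htoReal : ∀ (x y : ℝ), 0 ≤ x → 0 ≤ y →
      (ENNReal.ofReal x * ENNReal.ofReal y ^ d).toReal = x * y ^ d := by
    intro x y hx hy
    rw [ENNReal.toReal_mul, ← ENNReal.ofReal_pow hy, ENNReal.toReal_ofReal hx,
      ENNReal.toReal_ofReal (by positivity)]
  have ha1 : a ≤ D * 2 ^ d := by
    rw [ha, ← htoReal D 2 hDpos.le (by norm_num)]
    exact ENNReal.toReal_mono (ENNReal.mul_ne_top ENNReal.ofReal_ne_top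
      (ENNReal.pow_ne_top ENNReal.ofReal_ne_top)) hv1
  have ha2 : D * (2 * τ d / d) ^ d ≤ a := by
    rw [ha, ← htoReal D (2 * τ d / d) hDpos.le (by positivity)]
    exact ENNReal.toReal_mono hvolfin hv2
  have hb1 : b ≤ D⁻¹ * (1 + 1/τ d) ^ d := by
    rw [hb, ← htoReal D⁻¹ (1 + 1/τ d) (by positivity) (by positivity)]
    exact ENNReal.toReal_mono hbfin hv3
  have hb2 : D⁻¹ * (2/(d:ℝ)) ^ d ≤ b := by
    rw [hb, ← htoReal D⁻¹ (2/(d:ℝ)) (by positivity) (by positivity)]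
    exact ENNReal.toReal_mono hpolfin hv4
  have hDD : D * D⁻¹ = 1 := mul_inv_cancel₀ hDpos.ne'
  constructor
  · calc (2 * τ d / d) ^ d * (2 / (d:ℝ)) ^ d
        = (D * (2 * τ d / d) ^ d) * (D⁻¹ * (2/(d:ℝ)) ^ d) := by
          field_simp
      _ ≤ a * b := by
          apply mul_le_mul ha2 hb2 (by positivity) ha0
  · calc a * b ≤ (D * 2 ^ d) * (D⁻¹ * (1 + 1/τ d) ^ d) := by
          apply mul_le_mul ha1 hb1 hb0 (by positivity)
      _ = 2 ^ d * (1 + 1/τ d) ^ d := by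
          field_simp

end Main

end Stmt10
end Stmt10Aux

open Stmt10 in
set_option maxHeartbeats 1000000 in
theorem stmt10 (d : ℕ) :
    ∃ c₁ > (0 : ℝ), ∃ c₂ > (0 : ℝ),
      ∀ (K : Set (EuclideanSpace ℝ (Fin d))),
        Convex ℝ K → IsCompact K → (interior K).Nonempty →
        ∀ (c : EuclideanSpace ℝ (Fin d)), c = (volume K).toReal⁻¹ • ∫ y in K, y →
          c₁ ≤ (volume K).toReal * (volume (polarAt c K)).toReal ∧
            (volume K).toReal * (volume (polarAt c K)).toReal ≤ c₂ := by
  rcases Nat.eq_zero_or_pos d with hd0 | hd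
  · -- degenerate case d = 0
    subst hd0
    refine ⟨1, one_pos, 1, one_pos, ?_⟩
    intro K hKconv hKcomp hKint c hc
    obtain ⟨x₀, hx₀⟩ := hKint
    have hx₀K : x₀ ∈ K := interior_subset hx₀
    haveI : Subsingleton (EuclideanSpace ℝ (Fin 0)) := by
      constructor
      intro a b
      ext i
      exact absurd i.2 (by omega)
    have hK : K = Set.univ := Set.eq_univ_of_forall fun y => by
      rwa [Subsingleton.elim y x₀]
    have hpolar : polarAt c K = Set.univ := Set.eq_univ_of_forall fun u => by
      intro v hv
      have h1 : v - c = 0 := Subsingleton.elim _ _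
      rw [h1, inner_zero_right]
      norm_num
    have huniv : volume (Set.univ : Set (EuclideanSpace ℝ (Fin 0))) = 1 := by
      have hmp := PiLp.volume_preserving_ofLp (Fin 0)
      have : (Set.univ : Set (EuclideanSpace ℝ (Fin 0)))
          = (WithLp.ofLp (p := 2) (V := Fin 0 → ℝ)) ⁻¹' (Set.univ.pi fun _ => Set.univ) := by
        simp [Set.pi_univ]
      rw [this, hmp.measure_preimage (MeasurableSet.univ_pi fun _ =>
        MeasurableSet.univ).nullMeasurableSet, volume_pi_pi]
      simp
    rw [hpolar, hK, huniv]
    norm_num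
  · -- main case
    have hdpos : (0:ℝ) < (d:ℝ) := by exact_mod_cast hd
    have hτ := Stmt10.τ_pos hd
    refine ⟨(2 * τ d / d) ^ d * (2 / (d:ℝ)) ^ d, ?_, 2 ^ d * (1 + 1 / τ d) ^ d, ?_, ?_⟩
    · apply mul_pos <;> apply pow_pos <;> [skip; skip] <;> positivity
    · have h1 : (0:ℝ) < 1 + 1/τ d := by positivity
      positivity
    intro K hKconv hKcomp hKint c hc
    have hKmeas : MeasurableSet K := hKcomp.measurableSet
    have hvolK : 0 < volume K := by
      calc (0:ENNReal) < volume (interior K) := (isOpen_interior.measure_pos volume hKint)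
        _ ≤ volume K := measure_mono interior_subset
    have hVfin : volume K ≠ ⊤ := hKcomp.measure_lt_top.ne
    have hVpos : 0 < (volume K).toReal := ENNReal.toReal_pos hvolK.ne' hVfin
    have hIid : IntegrableOn (fun y => y) K volume :=
      (continuous_id.continuousOn).integrableOn_compact hKcomp
    -- c is in K
    haveI hfm : IsFiniteMeasure (volume.restrict K) :=
      ⟨by rwa [Measure.restrict_apply_univ, lt_top_iff_ne_top]⟩
    haveI hnz : NeZero (volume.restrict K) :=
      ⟨by simp only [Ne, Measure.restrict_eq_zero]; exact hvolK.ne'⟩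
    have hcK : c ∈ K := by
      have havg : c = ⨍ y in K, y := by
        rw [average_eq, measureReal_restrict_apply_univ, hc]; rfl
      rw [havg]
      exact hKconv.average_mem hKcomp.isClosed
        ((ae_restrict_mem hKmeas).mono fun x hx => hx) hIid
    -- translate so that the centroid is the origin
    set C : Set (EuclideanSpace ℝ (Fin d)) := (fun z => -c + z) '' K with hCdef
    have hCconv : Convex ℝ C := hKconv.translate (-c)
    have hCcomp : IsCompact C := hKcomp.image (continuous_const.add continuous_id)
    have h0C : (0:EuclideanSpace ℝ (Fin d)) ∈ C := ⟨c, hcK, by simp⟩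
    have hCpre : C = (fun z => c + z) ⁻¹' K := by
      ext x
      constructor
      · rintro ⟨k, hk, rfl⟩
        simpa using hk
      · intro hx
        exact ⟨c + x, hx, by simp⟩
    have hvolC : volume C = volume K := by
      rw [hCpre]
      exact (measurePreserving_add_left volume c).measure_preimage hKmeas.nullMeasurableSet
    have hvolCpos : 0 < volume C := hvolC ▸ hvolK
    have hcentC : (∫ x in C, x) = (0:EuclideanSpace ℝ (Fin d)) := by
      have h1 : (∫ x in C, x) = ∫ x in K, (-c + x) := by
        rw [hCdef]
        exact MeasurePreserving.setIntegral_image_emb (measurePreserving_add_left volume (-c))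
          (MeasurableEquiv.addLeft (-c)).measurableEmbedding (fun y => y) K
      have h2 : (∫ x in K, ((-c) + x)) = (volume K).toReal • (-c) + ∫ x in K, x := by
        rw [integral_add (integrable_const (-c)) hIid, setIntegral_const]; rfl
      have h3 : (volume K).toReal • c = ∫ x in K, x := by
        rw [hc, smul_inv_smul₀ hVpos.ne']
      rw [h1, h2, smul_neg, h3]
      exact neg_add_cancel _
    have hpolar : polarAt c K = polar0 C := by
      ext u
      constructor
      · rintro h - ⟨v, hv, rfl⟩
        have := h v hv
        rw [sub_eq_neg_add] at this
        exact this
      · intro h v hv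
        have := h _ ⟨v, hv, rfl⟩
        rw [sub_eq_neg_add]
        exact this
    have hmain := body_bounds hd hCconv hCcomp h0C hvolCpos hcentC
    rw [hpolar, ← hvolC]
    exact hmain
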